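/- Let A : U → Ũ and C : ℝ^{r,s} → ℝ^{s,r} be bijective linear maps between admissible modules of Cl_{r,s} and Cl_{s,r} respectively, satisfying A^τ J̃_z A = J_{C^τ(z)} for all z ∈ ℝ^{s,r}, with |det(A A^τ)| = 1, r ≠ s, and dim U = dim Ũ = 2N. Then C C^τ = −Id on ℝ^{s,r}. -/

import Mathlib

/-- The standard pseudo-Euclidean bilinear form of signature `(r, n - r)` on `ℝⁿ`. -/
noncomputable def stdForm (n r : ℕ) : LinearMap.BilinForm ℝ (Fin n → ℝ) :=
  Matrix.toBilin' (Matrix.diagonal fun i : Fin n => if (i : ℕ) < r then (1 : ℝ) else -1)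

lemma stdForm_apply (n r : ℕ) (z w : Fin n → ℝ) :
    stdForm n r z w = ∑ i : Fin n, (if (i : ℕ) < r then (1:ℝ) else -1) * (z i * w i) := by
  simp only [stdForm, Matrix.toBilin'_apply', dotProduct, Matrix.mulVec_diagonal]
  exact Finset.sum_congr rfl fun i _ => by ring

lemma stdForm_symm (n r : ℕ) (z w : Fin n → ℝ) : stdForm n r z w = stdForm n r w z := by
  simp only [stdForm_apply]
  exact Finset.sum_congr rfl fun i _ => by ring

lemma stdForm_right_nondeg {n r : ℕ} {w : Fin n → ℝ}
    (h : ∀ v, stdForm n r v w = 0) : w = 0 := by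
  funext i
  have := h (Pi.single i 1)
  rw [stdForm_apply] at this
  rw [Finset.sum_eq_single i] at this
  · simp only [Pi.single_eq_same, one_mul] at this
    split_ifs at this with hi
    · simpa [hi] using this
    · have := neg_eq_zero.mp (by simpa [hi] using this)
      exact this
  · intro j _ hj; simp [Pi.single_eq_of_ne' hj.symm]
  · intro hmem; exact absurd (Finset.mem_univ i) hmem

/-- An "inclusion into first s coordinates" linear map. -/
def inclMap (n s : ℕ) (hsn : s ≤ n) : (Fin s → ℝ) →ₗ[ℝ] (Fin n → ℝ) where
  toFun x i := if h : (i : ℕ) < s then x ⟨i, h⟩ else 0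
  map_add' x y := by funext i; by_cases h : (i : ℕ) < s <;> simp [h]
  map_smul' c x := by funext i; by_cases h : (i : ℕ) < s <;> simp [h]

/-- Sylvester-type impossibility: no linear "isometry" from `stdForm n s` to
`stdForm n r` when `r < s` and `r + s = n`. -/
lemma sylvester_aux (n r s : ℕ) (hn : r + s = n) (hlt : r < s)
    (M : (Fin n → ℝ) →ₗ[ℝ] (Fin n → ℝ))
    (h : ∀ x y, stdForm n r (M x) (M y) = stdForm n s x y) : False := by
  have hsn : s ≤ n := by omega
  have hrn : r ≤ n := by omega
  set ι := inclMap n s hsn with hι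
  set π := LinearMap.funLeft ℝ ℝ (Fin.castLE hrn) with hπ
  set φ := π ∘ₗ M ∘ₗ ι with hφ
  -- φ : ℝ^s → ℝ^r is not injective
  have hninj : ¬ Function.Injective φ := by
    intro hinj
    have := LinearMap.finrank_le_finrank_of_injective hinj
    simp [Module.finrank_pi] at this
    omega
  obtain ⟨a, b, hab, hne⟩ : ∃ a b, φ a = φ b ∧ a ≠ b := by
    simpa [Function.Injective, not_forall] using hninj
  set x := a - b with hx
  have hx0 : x ≠ 0 := sub_ne_zero.mpr hne
  have hφx : φ x = 0 := by rw [hx, map_sub, hab, sub_self]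
  set u := ι x with hu
  have hui : ∀ (i : Fin n) (hi : (i : ℕ) < s), u i = x ⟨i, hi⟩ := by
    intro i hi; simp [hu, hι, inclMap, hi]
  have hui' : ∀ i : Fin n, ¬ ((i : ℕ) < s) → u i = 0 := by
    intro i hi; simp [hu, hι, inclMap, hi]
  -- stdForm n s u u > 0
  have hpos : 0 < stdForm n s u u := by
    rw [stdForm_apply]
    apply Finset.sum_pos'
    · intro i _
      by_cases hi : (i : ℕ) < s
      · simp only [hi, if_pos, one_mul]; exact mul_self_nonneg _
      · simp [hui' i hi]
    · obtain ⟨j, hj⟩ := Function.ne_iff.mp hx0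
      refine ⟨⟨(j : ℕ), by omega⟩, Finset.mem_univ _, ?_⟩
      have hjs : ((⟨(j : ℕ), by omega⟩ : Fin n) : ℕ) < s := j.2
      rw [hui _ hjs]
      simp only [hjs, if_pos, one_mul]
      have hxj : x ⟨(j:ℕ), by omega⟩ ≠ 0 := by
        convert hj using 2
        rfl
      exact mul_self_pos.mpr hxj
  -- but stdForm n r (M u) (M u) ≤ 0
  have hMzero : ∀ i : Fin n, (i : ℕ) < r → M u i = 0 := by
    intro i hi
    have := congrFun hφx ⟨(i : ℕ), hi⟩
    simpa [hφ, hπ, LinearMap.funLeft, Fin.castLE, hu] using this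
  have hnonpos : stdForm n r (M u) (M u) ≤ 0 := by
    rw [stdForm_apply]
    apply Finset.sum_nonpos
    intro i _
    by_cases hi : (i : ℕ) < r
    · simp [hMzero i hi]
    · simp only [hi, if_neg, not_false_iff, neg_mul, one_mul, neg_nonpos]
      exact mul_self_nonneg _
  rw [h u u] at hnonpos
  linarith

open Polynomial in
/-- If two quadratic forms agree in absolute value everywhere and agree (with nonzero
value) at one point, they agree everywhere. -/
lemma quad_sign_lemma {V : Type*} [AddCommGroup V] [Module ℝ V]
    (B1 B2 : LinearMap.BilinForm ℝ V)
    (habs : ∀ w, |B1 w w| = |B2 w w|)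
    (w0 : V) (h0 : B1 w0 w0 = B2 w0 w0) (hne : B2 w0 w0 ≠ 0) :
    ∀ u, B1 u u = B2 u u := by
  intro u
  set v := u - w0 with hv
  set P : ℝ[X] := C (B1 w0 w0) + C (B1 w0 v + B1 v w0) * X + C (B1 v v) * X ^ 2 with hP
  set Q : ℝ[X] := C (B2 w0 w0) + C (B2 w0 v + B2 v w0) * X + C (B2 v v) * X ^ 2 with hQ
  have hPe : ∀ t : ℝ, P.eval t = B1 (w0 + t • v) (w0 + t • v) := by
    intro t
    simp only [hP, eval_add, eval_mul, eval_C, eval_X, eval_pow, map_add, map_smul,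
      LinearMap.add_apply, LinearMap.smul_apply, smul_eq_mul]
    ring
  have hQe : ∀ t : ℝ, Q.eval t = B2 (w0 + t • v) (w0 + t • v) := by
    intro t
    simp only [hQ, eval_add, eval_mul, eval_C, eval_X, eval_pow, map_add, map_smul,
      LinearMap.add_apply, LinearMap.smul_apply, smul_eq_mul]
    ring
  have hsq : P * P = Q * Q := by
    apply Polynomial.funext
    intro t
    have h := habs (w0 + t • v)
    rw [eval_mul, eval_mul, hPe, hQe]
    calc B1 (w0 + t • v) (w0 + t • v) * B1 (w0 + t • v) (w0 + t • v)
        = |B1 (w0 + t • v) (w0 + t • v)| * |B1 (w0 + t • v) (w0 + t • v)| :=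
          (abs_mul_abs_self _).symm
      _ = |B2 (w0 + t • v) (w0 + t • v)| * |B2 (w0 + t • v) (w0 + t • v)| := by rw [h]
      _ = B2 (w0 + t • v) (w0 + t • v) * B2 (w0 + t • v) (w0 + t • v) :=
          abs_mul_abs_self _
  have hfac : (P - Q) * (P + Q) = 0 := by
    have : P * P - Q * Q = 0 := by rw [hsq]; ring
    calc (P - Q) * (P + Q) = P * P - Q * Q := by ring
      _ = 0 := this
  rcases mul_eq_zero.mp hfac with hcase | hcase
  · have hPQ : P = Q := by linear_combination hcase
    have := congrArg (Polynomial.eval (1 : ℝ)) hPQ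
    rw [hPe, hQe] at this
    simpa [hv] using this
  · exfalso
    have := congrArg (Polynomial.eval (0 : ℝ)) hcase
    rw [Polynomial.eval_add, hPe, hQe] at this
    simp only [zero_smul, add_zero, Polynomial.eval_zero] at this
    rw [h0] at this
    exact hne (by linarith)

lemma polarize_lemma {V : Type*} [AddCommGroup V] [Module ℝ V]
    (B : LinearMap.BilinForm ℝ V) (hsym : ∀ x y, B x y = B y x)
    (hdiag : ∀ w, B w w = 0) : ∀ x y, B x y = 0 := by
  intro x y
  have h := hdiag (x + y)
  simp only [map_add, LinearMap.add_apply] at h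
  have := hsym x y
  have hx := hdiag x
  have hy := hdiag y
  linarith

lemma pow_eq_pow_nonneg {a b : ℝ} {N : ℕ} (hN : N ≠ 0) (ha : 0 ≤ a) (hb : 0 ≤ b)
    (h : a ^ N = b ^ N) : a = b := by
  rcases lt_trichotomy a b with hlt | he | hlt
  · exact absurd h (ne_of_lt (pow_lt_pow_left₀ hlt ha hN))
  · exact he
  · exact absurd h.symm (ne_of_lt (pow_lt_pow_left₀ hlt hb hN))

lemma mul_self_nonneg_eq {a b : ℝ} (ha : 0 ≤ a) (hb : 0 ≤ b) (h : a * a = b * b) : a = b := by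
  rcases mul_self_eq_mul_self_iff.mp h with h' | h'
  · exact h'
  · linarith

lemma stdForm_single (n r : ℕ) (i : Fin n) :
    stdForm n r (Pi.single i 1) (Pi.single i 1) = if (i : ℕ) < r then 1 else -1 := by
  rw [stdForm_apply, Finset.sum_eq_single i]
  · simp
  · intro j _ hj; simp [Pi.single_eq_of_ne' hj.symm]
  · intro hmem; exact absurd (Finset.mem_univ i) hmem

/-- If `A : U → W`, `C : ℝ^{r,s} → ℝ^{s,r}` are bijective linear maps between
admissible modules of `Cl_{r,s}` and `Cl_{s,r}` with `Aᵀ J̃_z A = J_{Cᵀ z}`,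
`|det (A Aᵀ)| = 1`, `r ≠ s`, `dim U = dim W = 2N`, then `C Cᵀ = -Id`. -/
theorem CCtau_eq_neg_id
    {U W : Type*}
    [AddCommGroup U] [Module ℝ U] [FiniteDimensional ℝ U]
    [AddCommGroup W] [Module ℝ W] [FiniteDimensional ℝ W]
    (n r s : ℕ) (hn : r + s = n) (hrs : r ≠ s) (N : ℕ) (hN : 0 < N)
    (hdU : Module.finrank ℝ U = 2 * N) (hdW : Module.finrank ℝ W = 2 * N)
    (BU : LinearMap.BilinForm ℝ U) (hBUnd : BU.Nondegenerate)
    (hBUsymm : ∀ x y : U, BU x y = BU y x)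
    (BW : LinearMap.BilinForm ℝ W) (hBWnd : BW.Nondegenerate)
    (hBWsymm : ∀ x y : W, BW x y = BW y x)
    (J : (Fin n → ℝ) →ₗ[ℝ] Module.End ℝ U)
    (hJ : ∀ z, J z * J z = -(stdForm n r z z) • (1 : Module.End ℝ U))
    (hJskew : ∀ (z : Fin n → ℝ) (x y : U), BU (J z x) y + BU x (J z y) = 0)
    (J' : (Fin n → ℝ) →ₗ[ℝ] Module.End ℝ W)
    (hJ' : ∀ w, J' w * J' w = -(stdForm n s w w) • (1 : Module.End ℝ W))
    (hJ'skew : ∀ (w : Fin n → ℝ) (x y : W), BW (J' w x) y + BW x (J' w y) = 0)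
    (A : U →ₗ[ℝ] W) (hA : Function.Bijective A)
    (C : (Fin n → ℝ) →ₗ[ℝ] (Fin n → ℝ)) (hC : Function.Bijective C)
    (Aτ : W →ₗ[ℝ] U) (hAτ : ∀ (x : U) (y : W), BW (A x) y = BU x (Aτ y))
    (Cτ : (Fin n → ℝ) →ₗ[ℝ] (Fin n → ℝ))
    (hCτ : ∀ z w : Fin n → ℝ, stdForm n s (C z) w = stdForm n r z (Cτ w))
    (hrel : ∀ w : Fin n → ℝ,
      (Aτ ∘ₗ (J' w : W →ₗ[ℝ] W) ∘ₗ A : U →ₗ[ℝ] U) = J (Cτ w))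
    (hdet : |LinearMap.det (A ∘ₗ Aτ)| = 1) :
    C ∘ₗ Cτ = -LinearMap.id := by
  -- determinant of J z
  have hdetJ : ∀ z, |LinearMap.det (J z)| = |stdForm n r z z| ^ N := by
    intro z
    have h2 : LinearMap.det (J z) * LinearMap.det (J z) = stdForm n r z z ^ (2 * N) := by
      calc LinearMap.det (J z) * LinearMap.det (J z)
          = LinearMap.det (J z * J z) := (map_mul _ _ _).symm
        _ = LinearMap.det (-(stdForm n r z z) • (1 : Module.End ℝ U)) := by rw [hJ z]
        _ = (-(stdForm n r z z)) ^ Module.finrank ℝ U *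
              LinearMap.det (LinearMap.id (R := ℝ) (M := U)) := LinearMap.det_smul _ _
        _ = stdForm n r z z ^ (2 * N) := by
            rw [LinearMap.det_id, hdU, mul_one, Even.neg_pow (even_two_mul N)]
    apply mul_self_nonneg_eq (abs_nonneg _) (pow_nonneg (abs_nonneg _) _)
    rw [← abs_mul, h2, ← pow_add, ← abs_pow]
    congr 1
    ring
  have hdetJ' : ∀ w, |LinearMap.det (J' w)| = |stdForm n s w w| ^ N := by
    intro w
    have h2 : LinearMap.det (J' w) * LinearMap.det (J' w) = stdForm n s w w ^ (2 * N) := by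
      calc LinearMap.det (J' w) * LinearMap.det (J' w)
          = LinearMap.det (J' w * J' w) := (map_mul _ _ _).symm
        _ = LinearMap.det (-(stdForm n s w w) • (1 : Module.End ℝ W)) := by rw [hJ' w]
        _ = (-(stdForm n s w w)) ^ Module.finrank ℝ W *
              LinearMap.det (LinearMap.id (R := ℝ) (M := W)) := LinearMap.det_smul _ _
        _ = stdForm n s w w ^ (2 * N) := by
            rw [LinearMap.det_id, hdW, mul_one, Even.neg_pow (even_two_mul N)]
    apply mul_self_nonneg_eq (abs_nonneg _) (pow_nonneg (abs_nonneg _) _)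
    rw [← abs_mul, h2, ← pow_add, ← abs_pow]
    congr 1
    ring
  -- conjugation: det (J (Cτ w)) = det (A ∘ₗ Aτ) * det (J' w)
  set e : U ≃ₗ[ℝ] W := LinearEquiv.ofBijective A hA with he
  have hdet2 : ∀ w, LinearMap.det (J (Cτ w)) =
      LinearMap.det (A ∘ₗ Aτ) * LinearMap.det (J' w) := by
    intro w
    have hcomp : (Aτ ∘ₗ (J' w : W →ₗ[ℝ] W) ∘ₗ A : U →ₗ[ℝ] U) =
        (e.symm : W →ₗ[ℝ] U) ∘ₗ ((A ∘ₗ Aτ) ∘ₗ (J' w : W →ₗ[ℝ] W)) ∘ₗ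
          ((e.symm.symm : U ≃ₗ[ℝ] W) : U →ₗ[ℝ] W) := by
      apply LinearMap.ext
      intro x
      simp only [LinearMap.comp_apply, LinearEquiv.coe_coe, LinearEquiv.symm_symm]
      have hex : ∀ y : U, e y = A y := fun y => rfl
      rw [hex x]
      calc Aτ (J' w (A x))
          = e.symm (e (Aτ (J' w (A x)))) := (e.symm_apply_apply _).symm
        _ = e.symm (A (Aτ (J' w (A x)))) := by rw [hex]
    rw [← hrel w, hcomp, LinearMap.det_conj, LinearMap.det_comp]
  -- pointwise absolute-value equality
  have habs : ∀ w, |stdForm n r (Cτ w) (Cτ w)| = |stdForm n s w w| := by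
    intro w
    apply pow_eq_pow_nonneg hN.ne' (abs_nonneg _) (abs_nonneg _)
    rw [← hdetJ (Cτ w), ← hdetJ' w, hdet2 w, abs_mul, hdet, one_mul]
  -- the composed bilinear form
  set B1 : LinearMap.BilinForm ℝ (Fin n → ℝ) := (stdForm n r).compl₁₂ Cτ Cτ with hB1
  have hB1apply : ∀ x y, B1 x y = stdForm n r (Cτ x) (Cτ y) := fun x y => rfl
  have habs1 : ∀ w, |B1 w w| = |stdForm n s w w| := fun w => by
    rw [hB1apply]; exact habs w
  -- base point
  have hn1 : 1 ≤ n := by omega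
  set i0 : Fin n := ⟨0, by omega⟩ with hi0
  set w0 : Fin n → ℝ := Pi.single i0 1 with hw0
  have hne : stdForm n s w0 w0 ≠ 0 := by
    rw [hw0, stdForm_single]
    split_ifs <;> norm_num
  have hcases := abs_eq_abs.mp (habs1 w0)
  -- symmetry of B1 and stdForm n s
  have hB1symm : ∀ x y, B1 x y = B1 y x := fun x y => by
    rw [hB1apply, hB1apply, stdForm_symm]
  rcases hcases with h0 | h0
  · -- impossible case: B1 = stdForm n s, contradicting r ≠ s (Sylvester)
    exfalso
    have hall := quad_sign_lemma B1 (stdForm n s) habs1 w0 h0 hne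
    have hbil : ∀ x y, B1 x y = stdForm n s x y := by
      have hz := polarize_lemma (B1 - stdForm n s)
        (fun x y => by
          simp only [LinearMap.sub_apply]
          rw [hB1symm, stdForm_symm])
        (fun w => by simp only [LinearMap.sub_apply]; rw [hall w, sub_self])
      intro x y
      have := hz x y
      simp only [LinearMap.sub_apply] at this
      linarith
    -- Cτ is bijective
    have hCτinj : Function.Injective Cτ := by
      rw [injective_iff_map_eq_zero]
      intro w hw
      apply stdForm_right_nondeg (n := n) (r := s)
      intro v
      obtain ⟨z, hz⟩ := hC.2 v
      rw [← hz, hCτ, hw, map_zero]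
    have hCτsurj : Function.Surjective Cτ :=
      (LinearMap.injective_iff_surjective).mp hCτinj
    set eC : (Fin n → ℝ) ≃ₗ[ℝ] (Fin n → ℝ) :=
      LinearEquiv.ofBijective Cτ ⟨hCτinj, hCτsurj⟩ with heC
    have heCapp : ∀ x, eC x = Cτ x := fun x => rfl
    rcases hrs.lt_or_gt with hlt | hlt
    · exact sylvester_aux n r s hn hlt Cτ fun x y => by
        rw [← hB1apply, hbil]
    · refine sylvester_aux n s r (by omega) hlt (eC.symm : (Fin n → ℝ) →ₗ[ℝ] (Fin n → ℝ))
        fun x y => ?_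
      have h1 := hbil (eC.symm x) (eC.symm y)
      rw [hB1apply] at h1
      have h2 : Cτ (eC.symm x) = x := by rw [← heCapp]; exact eC.apply_symm_apply x
      have h3 : Cτ (eC.symm y) = y := by rw [← heCapp]; exact eC.apply_symm_apply y
      rw [h2, h3] at h1
      simpa using h1.symm
  · -- real case: B1 = - stdForm n s
    have habs1' : ∀ w, |B1 w w| = |(-(stdForm n s)) w w| := fun w => by
      simp only [LinearMap.neg_apply, abs_neg]
      exact habs1 w
    have h0' : B1 w0 w0 = (-(stdForm n s)) w0 w0 := by
      simp only [LinearMap.neg_apply]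
      exact h0
    have hne' : (-(stdForm n s)) w0 w0 ≠ 0 := by
      simp only [LinearMap.neg_apply, ne_eq, neg_eq_zero]
      exact hne
    have hall := quad_sign_lemma B1 (-(stdForm n s)) habs1' w0 h0' hne'
    have hbil : ∀ x y, B1 x y = -(stdForm n s x y) := by
      have hz := polarize_lemma (B1 + stdForm n s)
        (fun x y => by
          simp only [LinearMap.add_apply]
          rw [hB1symm, stdForm_symm])
        (fun w => by
          have := hall w
          simp only [LinearMap.neg_apply] at this
          simp only [LinearMap.add_apply]
          linarith)
      intro x y
      have := hz x y
      simp only [LinearMap.add_apply] at this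
      linarith
    -- conclude
    apply LinearMap.ext
    intro w
    simp only [LinearMap.comp_apply, LinearMap.neg_apply, LinearMap.id_coe, id_eq]
    have h5 : ∀ v, stdForm n s (C (Cτ w) + w) v = 0 := by
      intro v
      rw [map_add, LinearMap.add_apply]
      have h6 := hCτ (Cτ w) v
      have h7 := hbil w v
      rw [hB1apply] at h7
      rw [h6, h7]
      ring
    have h8 : C (Cτ w) + w = 0 := by
      apply stdForm_right_nondeg (n := n) (r := s)
      intro v
      rw [stdForm_symm]
      exact h5 v
    linear_combination h8
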